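/- Let δ > 0 and r ∈ (1, ∞), and let r' = r/(r−1). Define T on symmetric real 3×3 matrices by T(D) = ((|D| − δ)⁺/|D|) (1 + |D|²)^{(r−2)/2} D for D ≠ O and T(O) = O. Then there exist constants α > 0 and β > 0 (depending only on δ and r) such that T(D) : D ≥ α( |T(D)|^{r'} + |D|^{r} ) − β for every symmetric real 3×3 matrix D. Moreover, the same conclusion holds with exponent q = max{r, 2} in place of r (and q' = q/(q−1) in place of r') for the map T̃(D) = ((|D| − δ)⁺/|D|)(1 + |D|^{r−2}) D. -/

import Mathlib

/-- Frobenius norm of a real 3×3 matrix: `|A|² = tr(A²)` for symmetric `A`. -/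
noncomputable def frobNorm (A : Matrix (Fin 3) (Fin 3) ℝ) : ℝ :=
  Real.sqrt (∑ i, ∑ j, (A i j) ^ 2)

/-- Entrywise product `A : B = Σᵢⱼ Aᵢⱼ Bᵢⱼ`. -/
def mdot (A B : Matrix (Fin 3) (Fin 3) ℝ) : ℝ := ∑ i, ∑ j, A i j * B i j


open Real

lemma frobNorm_nonneg (A : Matrix (Fin 3) (Fin 3) ℝ) : 0 ≤ frobNorm A :=
  Real.sqrt_nonneg _

lemma mdot_self (A : Matrix (Fin 3) (Fin 3) ℝ) : mdot A A = frobNorm A ^ 2 := by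
  unfold mdot frobNorm
  rw [Real.sq_sqrt (by positivity)]
  simp [sq]

lemma frobNorm_smul (c : ℝ) (A : Matrix (Fin 3) (Fin 3) ℝ) :
    frobNorm (c • A) = |c| * frobNorm A := by
  unfold frobNorm
  have h : ∀ i j, ((c • A) i j) ^ 2 = c ^ 2 * (A i j) ^ 2 := by
    intro i j; simp [Matrix.smul_apply, smul_eq_mul]; ring
  simp_rw [h, ← Finset.mul_sum]
  rw [Real.sqrt_mul (sq_nonneg c), Real.sqrt_sq_eq_abs]

lemma mdot_smul (c : ℝ) (A B : Matrix (Fin 3) (Fin 3) ℝ) :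
    mdot (c • A) B = c * mdot A B := by
  unfold mdot
  simp_rw [Matrix.smul_apply, smul_eq_mul, Finset.mul_sum, mul_assoc]

lemma scalar_coercive (q q' M c₁ c₂ K : ℝ) (hq : 1 < q) (hq' : q' = q / (q - 1))
    (hM : 1 ≤ M) (hc₁ : 0 < c₁) (hc₂ : 0 ≤ c₂) (hK : 0 ≤ K)
    (f : ℝ → ℝ) (hf0 : ∀ d, 0 ≤ d → 0 ≤ f d)
    (hbd : ∀ d, 0 ≤ d → d ≤ M → f d ≤ K)
    (hlow : ∀ d, M ≤ d → c₁ * d ^ (q - 1) ≤ f d)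
    (hhigh : ∀ d, M ≤ d → f d ≤ c₂ * d ^ (q - 1)) :
    ∃ α : ℝ, 0 < α ∧ ∃ β : ℝ, 0 < β ∧
      ∀ d, 0 ≤ d → α * (f d ^ q' + d ^ q) - β ≤ f d * d := by
  have hq1 : (0:ℝ) < q - 1 := by linarith
  have hq'pos : 0 < q' := by rw [hq']; positivity
  have hc2q : (0:ℝ) < 1 + c₂ ^ q' := by positivity
  set α : ℝ := c₁ / (2 * (1 + c₂ ^ q')) with hα
  have hαpos : 0 < α := by positivity
  set β : ℝ := α * (K ^ q' + M ^ q) + 1 with hβ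
  have hβpos : 0 < β := by
    have : 0 ≤ K ^ q' := rpow_nonneg hK _
    have : 0 ≤ M ^ q := rpow_nonneg (by linarith) _
    positivity
  refine ⟨α, hαpos, β, hβpos, fun d hd => ?_⟩
  rcases le_or_gt d M with hdM | hdM
  · -- small d
    have h1 : f d ^ q' ≤ K ^ q' := rpow_le_rpow (hf0 d hd) (hbd d hd hdM) hq'pos.le
    have h2 : d ^ q ≤ M ^ q := rpow_le_rpow hd hdM (by linarith)
    have h3 : α * (f d ^ q' + d ^ q) ≤ α * (K ^ q' + M ^ q) := by
      apply mul_le_mul_of_nonneg_left (by linarith) hαpos.le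
    have h4 : 0 ≤ f d * d := mul_nonneg (hf0 d hd) hd
    simp only [hβ] at *
    linarith
  · -- large d
    have hdM' : M ≤ d := hdM.le
    have hd1 : (1:ℝ) ≤ d := le_trans hM hdM'
    have hd0 : (0:ℝ) < d := by linarith
    have hq'q : (q - 1) * q' = q := by
      rw [hq']; field_simp
    have hfup : f d ^ q' ≤ c₂ ^ q' * d ^ q := by
      calc f d ^ q' ≤ (c₂ * d ^ (q - 1)) ^ q' :=
            rpow_le_rpow (hf0 d hd) (hhigh d hdM') hq'pos.le
        _ = c₂ ^ q' * (d ^ (q - 1)) ^ q' :=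
            mul_rpow hc₂ (rpow_nonneg hd0.le _)
        _ = c₂ ^ q' * d ^ q := by
            rw [← rpow_mul hd0.le, hq'q]
    have hdq : d ^ q = d ^ (q - 1) * d := by
      have h := rpow_add hd0 (q - 1) 1
      rw [rpow_one] at h
      calc d ^ q = d ^ (q - 1 + 1) := by congr 1; ring
        _ = d ^ (q - 1) * d := h
    have hlo := hlow d hdM'
    have hdqnn : 0 ≤ d ^ (q - 1) := rpow_nonneg hd0.le _
    have key : α * (f d ^ q' + d ^ q) ≤ (c₁ / 2) * d ^ q := by
      have : α * (f d ^ q' + d ^ q) ≤ α * ((c₂ ^ q' + 1) * d ^ q) := by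
        apply mul_le_mul_of_nonneg_left _ hαpos.le
        have : 0 ≤ d ^ q := rpow_nonneg hd0.le _
        nlinarith
      calc α * (f d ^ q' + d ^ q) ≤ α * ((c₂ ^ q' + 1) * d ^ q) := this
        _ = (c₁ / 2) * d ^ q := by
            rw [hα]; field_simp; ring
    have key2 : (c₁ / 2) * d ^ q ≤ f d * d := by
      rw [hdq]
      have : (c₁ / 2) * d ^ (q - 1) ≤ f d := by nlinarith
      nlinarith
    have h4 : 0 ≤ f d * d := mul_nonneg (hf0 d hd) hd0.le
    have : α * (f d ^ q' + d ^ q) ≤ f d * d := le_trans key key2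
    linarith

lemma sq_rpow (d e : ℝ) (hd : 0 ≤ d) : ((d ^ 2 : ℝ)) ^ e = d ^ (2 * e) := by
  rw [← rpow_natCast d 2, ← rpow_mul hd]
  norm_num

lemma mul_rpow_self (d x : ℝ) (hd : 0 < d) : d * d ^ x = d ^ (1 + x) := by
  rw [rpow_add hd, rpow_one]

lemma scalar1 (r r' δ : ℝ) (hr : 1 < r) (hr' : r' = r / (r - 1)) (hδ : 0 < δ) :
    ∃ α : ℝ, 0 < α ∧ ∃ β : ℝ, 0 < β ∧ ∀ d, 0 ≤ d →
      α * ((max (d - δ) 0 * (1 + d ^ 2) ^ ((r - 2) / 2)) ^ r' + d ^ r) - β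
        ≤ (max (d - δ) 0 * (1 + d ^ 2) ^ ((r - 2) / 2)) * d := by
  set e : ℝ := (r - 2) / 2 with he
  set M : ℝ := δ + 1 with hMdef
  have hM : 1 ≤ M := by rw [hMdef]; linarith
  have h2e : (0:ℝ) < 2 ^ e := rpow_pos_of_pos two_pos e
  set c₁ : ℝ := (1 / (δ + 1)) * min 1 (2 ^ e) with hc₁def
  have hc₁ : 0 < c₁ := by
    apply mul_pos (by positivity) (lt_min one_pos h2e)
  set c₂ : ℝ := max 1 (2 ^ e) with hc₂def
  have hc₂ : (0:ℝ) ≤ c₂ := le_trans zero_le_one (le_max_left _ _)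
  set K : ℝ := M * max 1 ((1 + M ^ 2) ^ e) with hKdef
  have hK : 0 ≤ K := by
    apply mul_nonneg (by linarith)
    exact le_trans zero_le_one (le_max_left _ _)
  apply scalar_coercive r r' M c₁ c₂ K hr hr' hM hc₁ hc₂ hK
  · -- nonneg
    intro d hd
    exact mul_nonneg (le_max_right _ _) (rpow_nonneg (by positivity) _)
  · -- bounded on [0, M]
    intro d hd hdM
    have h1 : max (d - δ) 0 ≤ M := by
      apply max_le (by linarith) (by linarith)
    have h2 : (1 + d ^ 2) ^ e ≤ max 1 ((1 + M ^ 2) ^ e) := by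
      rcases le_or_gt 0 e with he0 | he0
      · refine le_trans (rpow_le_rpow (by positivity) ?_ he0) (le_max_right _ _)
        nlinarith
      · exact le_trans (rpow_le_one_of_one_le_of_nonpos (by nlinarith) he0.le)
          (le_max_left _ _)
    calc max (d - δ) 0 * (1 + d ^ 2) ^ e ≤ M * max 1 ((1 + M ^ 2) ^ e) := by
          apply mul_le_mul h1 h2 (rpow_nonneg (by positivity) _) (by linarith)
      _ = K := rfl
  · -- lower bound for d ≥ M
    intro d hdM
    have hd1 : (1:ℝ) ≤ d := le_trans hM hdM
    have hd0 : (0:ℝ) < d := by linarith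
    have hmax : max (d - δ) 0 = d - δ := max_eq_left (by rw [hMdef] at hdM; linarith)
    have step1 : d / (δ + 1) ≤ d - δ := by
      rw [div_le_iff₀ (by linarith)]
      rw [hMdef] at hdM; nlinarith
    have hsq : ((d ^ 2 : ℝ)) ^ e = d ^ (r - 2) := by
      rw [sq_rpow d e hd0.le]; congr 1; rw [he]; ring
    have step2 : min 1 (2 ^ e) * d ^ (r - 2) ≤ (1 + d ^ 2) ^ e := by
      rcases le_or_gt 0 e with he0 | he0
      · calc min 1 (2 ^ e) * d ^ (r - 2) ≤ 1 * d ^ (r - 2) :=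
              mul_le_mul_of_nonneg_right (min_le_left _ _) (rpow_nonneg hd0.le _)
          _ = ((d ^ 2 : ℝ)) ^ e := by rw [one_mul, hsq]
          _ ≤ (1 + d ^ 2) ^ e := rpow_le_rpow (by positivity) (by nlinarith) he0
      · have h2d : (1 + d ^ 2 : ℝ) ≤ 2 * d ^ 2 := by nlinarith
        calc min 1 (2 ^ e) * d ^ (r - 2) ≤ 2 ^ e * d ^ (r - 2) :=
              mul_le_mul_of_nonneg_right (min_le_right _ _) (rpow_nonneg hd0.le _)
          _ = (2 * d ^ 2 : ℝ) ^ e := by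
              rw [mul_rpow (by norm_num) (by positivity), hsq]
          _ ≤ (1 + d ^ 2) ^ e := rpow_le_rpow_of_nonpos (by positivity) h2d he0.le
    have hdr : d * d ^ (r - 2) = d ^ (r - 1) := by
      rw [mul_rpow_self d _ hd0]; congr 1; ring
    rw [hmax]
    calc c₁ * d ^ (r - 1) = (d / (δ + 1)) * (min 1 (2 ^ e) * d ^ (r - 2)) := by
          rw [← hdr, hc₁def]; ring
      _ ≤ (d - δ) * (1 + d ^ 2) ^ e := by
          apply mul_le_mul step1 step2
            (mul_nonneg (le_min zero_le_one h2e.le) (rpow_nonneg hd0.le _))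
            (by linarith)
  · -- upper bound for d ≥ M
    intro d hdM
    have hd1 : (1:ℝ) ≤ d := le_trans hM hdM
    have hd0 : (0:ℝ) < d := by linarith
    have hsq : ((d ^ 2 : ℝ)) ^ e = d ^ (r - 2) := by
      rw [sq_rpow d e hd0.le]; congr 1; rw [he]; ring
    have h1 : max (d - δ) 0 ≤ d := max_le (by linarith) hd0.le
    have h2 : (1 + d ^ 2) ^ e ≤ c₂ * d ^ (r - 2) := by
      rcases le_or_gt 0 e with he0 | he0
      · have h2d : (1 + d ^ 2 : ℝ) ≤ 2 * d ^ 2 := by nlinarith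
        calc (1 + d ^ 2) ^ e ≤ (2 * d ^ 2 : ℝ) ^ e :=
              rpow_le_rpow (by positivity) h2d he0
          _ = 2 ^ e * d ^ (r - 2) := by
              rw [mul_rpow (by norm_num) (by positivity), hsq]
          _ ≤ c₂ * d ^ (r - 2) :=
              mul_le_mul_of_nonneg_right (le_max_right _ _) (rpow_nonneg hd0.le _)
      · calc (1 + d ^ 2) ^ e ≤ ((d ^ 2 : ℝ)) ^ e :=
              rpow_le_rpow_of_nonpos (by positivity) (by nlinarith) he0.le
          _ = 1 * d ^ (r - 2) := by rw [one_mul, hsq]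
          _ ≤ c₂ * d ^ (r - 2) :=
              mul_le_mul_of_nonneg_right (le_max_left _ _) (rpow_nonneg hd0.le _)
    have hdr : d * d ^ (r - 2) = d ^ (r - 1) := by
      rw [mul_rpow_self d _ hd0]; congr 1; ring
    calc max (d - δ) 0 * (1 + d ^ 2) ^ e ≤ d * (c₂ * d ^ (r - 2)) := by
          apply mul_le_mul h1 h2 (rpow_nonneg (by positivity) _) hd0.le
      _ = c₂ * d ^ (r - 1) := by rw [← hdr]; ring

lemma scalar2 (r δ q q' : ℝ) (hr : 1 < r) (hδ : 0 < δ) (hq : q = max r 2)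
    (hq' : q' = q / (q - 1)) :
    ∃ α : ℝ, 0 < α ∧ ∃ β : ℝ, 0 < β ∧ ∀ d, 0 ≤ d →
      α * ((max (d - δ) 0 * (1 + d ^ (r - 2))) ^ q' + d ^ q) - β
        ≤ (max (d - δ) 0 * (1 + d ^ (r - 2))) * d := by
  set M : ℝ := δ + 1 with hMdef
  have hM : 1 ≤ M := by rw [hMdef]; linarith
  have hq2 : (2:ℝ) ≤ q := by rw [hq]; exact le_max_right _ _
  have hq1 : 1 < q := by linarith
  set c₁ : ℝ := 1 / (δ + 1) with hc₁def
  have hc₁ : 0 < c₁ := by positivity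
  set K : ℝ := M * (1 + max (M ^ (r - 2)) (δ ^ (r - 2))) with hKdef
  have hmaxnn : 0 ≤ max (M ^ (r - 2)) (δ ^ (r - 2)) :=
    le_trans (rpow_nonneg (by linarith) _) (le_max_left _ _)
  have hK : 0 ≤ K := mul_nonneg (by linarith) (by linarith)
  apply scalar_coercive q q' M c₁ 2 K hq1 hq' hM hc₁ (by norm_num) hK
  · intro d hd
    exact mul_nonneg (le_max_right _ _) (add_nonneg zero_le_one (rpow_nonneg hd _))
  · -- bounded on [0, M]
    intro d hd hdM
    rcases le_or_gt d δ with hdδ | hdδ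
    · have : max (d - δ) 0 = 0 := max_eq_right (by linarith)
      rw [this, zero_mul]; exact hK
    · have h1 : max (d - δ) 0 ≤ M := max_le (by linarith) (by linarith)
      have h2 : d ^ (r - 2) ≤ max (M ^ (r - 2)) (δ ^ (r - 2)) := by
        rcases le_or_gt 0 (r - 2) with he0 | he0
        · exact le_trans (rpow_le_rpow hd hdM he0) (le_max_left _ _)
        · exact le_trans (rpow_le_rpow_of_nonpos hδ hdδ.le he0.le) (le_max_right _ _)
      calc max (d - δ) 0 * (1 + d ^ (r - 2))
          ≤ M * (1 + max (M ^ (r - 2)) (δ ^ (r - 2))) := by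
            apply mul_le_mul h1 (by linarith)
              (add_nonneg zero_le_one (rpow_nonneg hd _)) (by linarith)
        _ = K := rfl
  · -- lower bound for d ≥ M
    intro d hdM
    have hd1 : (1:ℝ) ≤ d := le_trans hM hdM
    have hd0 : (0:ℝ) < d := by linarith
    have hdM' : δ + 1 ≤ d := by rw [hMdef] at hdM; exact hdM
    have hmax : max (d - δ) 0 = d - δ := max_eq_left (by linarith)
    have step1 : d / (δ + 1) ≤ d - δ := by
      rw [div_le_iff₀ (by linarith)]; nlinarith
    have hrnn : 0 ≤ d ^ (r - 2) := rpow_nonneg hd0.le _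
    rw [hmax]
    rcases le_or_gt 2 r with hrc | hrc
    · have hqr : q = r := by rw [hq, max_eq_left hrc]
      have hdr : d * d ^ (r - 2) = d ^ (q - 1) := by
        rw [mul_rpow_self d _ hd0, hqr]; congr 1; ring
      calc c₁ * d ^ (q - 1) = (d / (δ + 1)) * d ^ (r - 2) := by
            rw [← hdr, hc₁def]; ring
        _ ≤ (d - δ) * (1 + d ^ (r - 2)) := by
            apply mul_le_mul step1 (by linarith) hrnn (by linarith)
    · have hqr : q = 2 := by rw [hq, max_eq_right hrc.le]
      have hdq : d ^ (q - 1) = d := by rw [hqr]; norm_num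
      calc c₁ * d ^ (q - 1) = (d / (δ + 1)) * 1 := by rw [hdq, hc₁def]; ring
        _ ≤ (d - δ) * (1 + d ^ (r - 2)) := by
            apply mul_le_mul step1 (by linarith) zero_le_one (by linarith)
  · -- upper bound for d ≥ M
    intro d hdM
    have hd1 : (1:ℝ) ≤ d := le_trans hM hdM
    have hd0 : (0:ℝ) < d := by linarith
    have h1 : max (d - δ) 0 ≤ d := max_le (by linarith) hd0.le
    have hrnn : 0 ≤ d ^ (r - 2) := rpow_nonneg hd0.le _
    rcases le_or_gt 2 r with hrc | hrc
    · have hqr : q = r := by rw [hq, max_eq_left hrc]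
      have hdr : d * d ^ (r - 2) = d ^ (q - 1) := by
        rw [mul_rpow_self d _ hd0, hqr]; congr 1; ring
      have hge1 : (1:ℝ) ≤ d ^ (r - 2) := one_le_rpow hd1 (by linarith)
      calc max (d - δ) 0 * (1 + d ^ (r - 2)) ≤ d * (2 * d ^ (r - 2)) := by
            apply mul_le_mul h1 (by linarith)
              (add_nonneg zero_le_one hrnn) hd0.le
        _ = 2 * d ^ (q - 1) := by rw [← hdr]; ring
    · have hqr : q = 2 := by rw [hq, max_eq_right hrc.le]
      have hdq : d ^ (q - 1) = d := by rw [hqr]; norm_num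
      have hle1 : d ^ (r - 2) ≤ 1 := rpow_le_one_of_one_le_of_nonpos hd1 (by linarith)
      calc max (d - δ) 0 * (1 + d ^ (r - 2)) ≤ d * 2 := by
            apply mul_le_mul h1 (by linarith)
              (add_nonneg zero_le_one hrnn) hd0.le
        _ = 2 * d ^ (q - 1) := by rw [hdq]; ring

lemma graph_reduce (δ q q' : ℝ) (hδ : 0 < δ)
    (g : ℝ → ℝ) (hg : ∀ d, 0 ≤ d → 0 ≤ g d)
    (T : Matrix (Fin 3) (Fin 3) ℝ → Matrix (Fin 3) (Fin 3) ℝ)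
    (hT : ∀ D, T D = ((max (frobNorm D - δ) 0 / frobNorm D) * g (frobNorm D)) • D)
    (scalar : ∃ α : ℝ, 0 < α ∧ ∃ β : ℝ, 0 < β ∧ ∀ d, 0 ≤ d →
        α * ((max (d - δ) 0 * g d) ^ q' + d ^ q) - β ≤ (max (d - δ) 0 * g d) * d) :
    ∃ α : ℝ, 0 < α ∧ ∃ β : ℝ, 0 < β ∧
      ∀ D : Matrix (Fin 3) (Fin 3) ℝ, D.IsSymm →
        α * (frobNorm (T D) ^ q' + frobNorm D ^ q) - β ≤ mdot (T D) D := by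
  obtain ⟨α, hα, β, hβ, hsc⟩ := scalar
  refine ⟨α, hα, β, hβ, fun D _ => ?_⟩
  have hd0 : 0 ≤ frobNorm D := frobNorm_nonneg D
  have hcnn : 0 ≤ (max (frobNorm D - δ) 0 / frobNorm D) * g (frobNorm D) :=
    mul_nonneg (div_nonneg (le_max_right _ _) hd0) (hg _ hd0)
  have hm0 : max ((0:ℝ) - δ) 0 = 0 := by apply max_eq_right; linarith
  have hfr : frobNorm (T D) = max (frobNorm D - δ) 0 * g (frobNorm D) := by
    rw [hT D, frobNorm_smul, abs_of_nonneg hcnn]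
    rcases eq_or_lt_of_le hd0 with h0 | h0
    · rw [← h0, hm0]; simp
    · field_simp [h0.ne']
  have hmd : mdot (T D) D = (max (frobNorm D - δ) 0 * g (frobNorm D)) * frobNorm D := by
    rw [hT D, mdot_smul, mdot_self]
    rcases eq_or_lt_of_le hd0 with h0 | h0
    · rw [← h0, hm0]; simp
    · field_simp [h0.ne']
  rw [hfr, hmd]
  exact hsc _ hd0


/-- Coercivity of the activated constitutive functions: the graph of `T`
(with factor `𝒮(d) = (1+d²)^{(r−2)/2}`) is an `r`-graph, and the graph of `T̃`
(with factor `𝒮(d) = 1 + d^{r−2}`) is a `q`-graph with `q = max{r, 2}`. -/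
theorem statement16 (r r' δ : ℝ) (hr : 1 < r) (hr' : r' = r / (r - 1)) (hδ : 0 < δ)
    (T Tt : Matrix (Fin 3) (Fin 3) ℝ → Matrix (Fin 3) (Fin 3) ℝ)
    (hT : ∀ D, T D = ((max (frobNorm D - δ) 0 / frobNorm D)
      * (1 + frobNorm D ^ 2) ^ ((r - 2) / 2)) • D)
    (hTt : ∀ D, Tt D = ((max (frobNorm D - δ) 0 / frobNorm D)
      * (1 + frobNorm D ^ (r - 2))) • D)
    (q q' : ℝ) (hq : q = max r 2) (hq' : q' = q / (q - 1)) :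
    (∃ α : ℝ, 0 < α ∧ ∃ β : ℝ, 0 < β ∧
      ∀ D : Matrix (Fin 3) (Fin 3) ℝ, D.IsSymm →
        α * (frobNorm (T D) ^ r' + frobNorm D ^ r) - β ≤ mdot (T D) D) ∧
    (∃ α : ℝ, 0 < α ∧ ∃ β : ℝ, 0 < β ∧
      ∀ D : Matrix (Fin 3) (Fin 3) ℝ, D.IsSymm →
        α * (frobNorm (Tt D) ^ q' + frobNorm D ^ q) - β ≤ mdot (Tt D) D) := by
  constructor
  · exact graph_reduce δ r r' hδ (fun d => (1 + d ^ 2) ^ ((r - 2) / 2))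
      (fun d hd => Real.rpow_nonneg (by positivity) _) T hT
      (scalar1 r r' δ hr hr' hδ)
  · exact graph_reduce δ q q' hδ (fun d => 1 + d ^ (r - 2))
      (fun d hd => add_nonneg zero_le_one (Real.rpow_nonneg hd _)) Tt hTt
      (scalar2 r δ q q' hr hδ hq hq')
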